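/- Let π = v₀…vᵢ u …v_ℓ be a chordless s-t path in G, and let G' be the induced subgraph of G obtained by removing v₀,…,vᵢ and all good neighbours of v₀,…,vᵢ (other than those on π up to u). Suppose S ⊆ N_{G'}(u) is a set of neighbours of u such that every path from u to t in G' passes through some vertex of S. Then every good neighbour of u (in the sense that some chordless s-t path of G extends the prefix v₀…vᵢu through it) that lies in G' belongs to S. -/

import Mathlib

open SimpleGraph

variable {V : Type*}

/-- `l` is a (simple) path in `G`, given as its list of vertices. -/
def IsPathL (G : SimpleGraph V) (l : List V) : Prop :=
  l.Chain' G.Adj ∧ l.Nodup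

/-- `l` is an `s`-`t` path in `G`. -/
def IsStPathL (G : SimpleGraph V) (s t : V) (l : List V) : Prop :=
  IsPathL G l ∧ l.head? = some s ∧ l.getLast? = some t

/-- No two non-consecutive vertices of `l` are adjacent in `G`. -/
def NoChord (G : SimpleGraph V) (l : List V) : Prop :=
  ∀ (i j : ℕ) (hi : i < l.length) (hj : j < l.length), i + 1 < j →
    ¬ G.Adj (l.get ⟨i, hi⟩) (l.get ⟨j, hj⟩)

/-- `l` is a chordless (induced) `s`-`t` path in `G`. -/
def IsChordlessStPathL (G : SimpleGraph V) (s t : V) (l : List V) : Prop :=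
  IsStPathL G s t l ∧ NoChord G l

/-- `x` is a good neighbour of `vᵢ` (the `i`-th vertex of `l`): some chordless `s`-`t`
path of `G` has `v₀ v₁ … vᵢ x` as a prefix. -/
def GoodNbr (G : SimpleGraph V) (s t : V) (l : List V) (i : ℕ) (x : V) : Prop :=
  ∃ l' : List V, IsChordlessStPathL G s t l' ∧ (l.take (i + 1) ++ [x]) <+: l'

/-- `l` is a cycle in `G`: at least 3 distinct vertices, each cyclically consecutive pair
adjacent. -/
def IsCycleL (G : SimpleGraph V) (l : List V) : Prop :=
  3 ≤ l.length ∧ l.Nodup ∧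
    ∀ (i : ℕ) (hi : i < l.length),
      G.Adj (l.get ⟨i, hi⟩) (l.get ⟨(i + 1) % l.length, Nat.mod_lt _ (by omega)⟩)

/-- `l` is a chordless (induced) cycle in `G`: a cycle such that any two adjacent vertices on
it are cyclically consecutive. -/
def IsChordlessCycleL (G : SimpleGraph V) (l : List V) : Prop :=
  IsCycleL G l ∧
    ∀ (i j : ℕ) (hi : i < l.length) (hj : j < l.length),
      G.Adj (l.get ⟨i, hi⟩) (l.get ⟨j, hj⟩) →
        (i + 1) % l.length = j ∨ (j + 1) % l.length = i

/-- The subgraph of `G` induced by the complement of `R` (vertices of `R` deleted), kept on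
the same vertex type. -/
def delSet (G : SimpleGraph V) (R : Set V) : SimpleGraph V where
  Adj a b := G.Adj a b ∧ a ∉ R ∧ b ∉ R
  symm := by
    first
    | exact fun _ _ ⟨h, ha, hb⟩ => ⟨h.symm, hb, ha⟩
    | exact ⟨fun _ _ ⟨h, ha, hb⟩ => ⟨h.symm, hb, ha⟩⟩
  loopless := by
    first
    | exact ⟨fun a ⟨h, _, _⟩ => G.loopless.irrefl a h⟩
    | exact ⟨fun a ⟨h, _, _⟩ => G.irrefl h⟩

/-- Cleanup, soundness half: let `π = v₀ … vᵢ u … v_ℓ` be a chordless `s`-`t` path, and `G'`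
the graph obtained from `G` by removing `v₀, …, vᵢ` together with all good neighbours of
`v₀, …, vᵢ` other than `u`. If `S` is a set of neighbours of `u` in `G'` such that every
`u`-`t` path of `G'` meets `S`, then every good neighbour of `u` lying in `G'` belongs to
`S`. -/
theorem stmt10 (G : SimpleGraph V) (s t u : V) (l : List V) (i : ℕ)
    (hl : IsChordlessStPathL G s t l)
    (hu : ∃ h : i + 1 < l.length, l.get ⟨i + 1, h⟩ = u)
    (R : Set V)
    (hR : R = ({x | ∃ k ≤ i, ∃ hk : k < l.length, x = l.get ⟨k, hk⟩} ∪
               {x | ∃ k ≤ i, GoodNbr G s t l k x}) \ {u})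
    (S : Set V)
    (hSsub : ∀ w ∈ S, (delSet G R).Adj u w)
    (hcut : ∀ q : List V, IsStPathL (delSet G R) u t q → ∃ x ∈ S, x ∈ q) :
    ∀ w : V, w ∉ R → GoodNbr G s t l (i + 1) w → w ∈ S := by
  intro w hwR hgood
  obtain ⟨h1, hgetu⟩ := hu
  simp only [List.get_eq_getElem] at hgetu
  obtain ⟨l', ⟨⟨⟨hch, hnd⟩, hhd, hlst⟩, hnc⟩, hpre⟩ := hgood
  rw [show i + 1 + 1 = i + 2 by omega] at hpre
  have hlen_take : (l.take (i + 2)).length = i + 2 := by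
    simp [List.length_take]; omega
  have hlenpre : (l.take (i + 2) ++ [w]).length = i + 3 := by
    simp [hlen_take]
  have hlen' : i + 3 ≤ l'.length := by
    have := hpre.length_le; omega
  -- entries of l' from the prefix
  have hlk : ∀ k (hk : k ≤ i + 1), l'[k]'(by omega) = l[k]'(by omega) := by
    intro k hk
    have h2 : k < (l.take (i + 2) ++ [w]).length := by omega
    have := (hpre.getElem (i := k) h2).symm
    rw [this, List.getElem_append_left (by omega), List.getElem_take]
  have hlw : l'[i + 2]'(by omega) = w := by
    have h2 : i + 2 < (l.take (i + 2) ++ [w]).length := by omega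
    have := (hpre.getElem (i := i + 2) h2).symm
    rw [this]
    have : i + 2 = (l.take (i + 2)).length + 0 := by omega
    simp [List.getElem_append_right, hlen_take]
  have hu' : l'[i + 1]'(by omega) = u := by rw [hlk (i + 1) le_rfl, hgetu]
  -- key: vertices of l' at positions ≥ i+1 avoid R
  have hnotR : ∀ j (hj : j < l'.length), i + 1 ≤ j → l'[j] ∉ R := by
    intro j hj hij hmem
    rw [hR] at hmem
    obtain ⟨hmem, hne⟩ := hmem
    simp only [Set.mem_singleton_iff] at hne
    rcases hmem with h | h
    · obtain ⟨k, hk, hkl, hxk⟩ := h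
      simp only [List.get_eq_getElem] at hxk
      have heq : l'[k]'(by omega) = l'[j] := by rw [hlk k (by omega), ← hxk]
      have : k = j := hnd.getElem_inj_iff.mp heq
      omega
    · obtain ⟨k, hk, l'', ⟨⟨⟨hch2, _⟩, _, _⟩, _⟩, hpre2⟩ := h
      have hkl : k + 1 ≤ l.length := by omega
      have hlen_take2 : (l.take (k + 1)).length = k + 1 := by
        simp [List.length_take]; omega
      have hlen2 : k + 2 ≤ l''.length := by
        have := hpre2.length_le
        simp [hlen_take2] at this; omega
      have hek : l''[k]'(by omega) = l[k]'(by omega) := by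
        have h2 : k < (l.take (k + 1) ++ [l'[j]]).length := by
          simp only [List.length_append, hlen_take2, List.length_singleton]; omega
        rw [← hpre2.getElem h2, List.getElem_append_left (by omega), List.getElem_take]
      have hex : l''[k + 1]'(by omega) = l'[j] := by
        have h2 : k + 1 < (l.take (k + 1) ++ [l'[j]]).length := by
          simp only [List.length_append, hlen_take2, List.length_singleton]; omega
        rw [← hpre2.getElem h2]
        have : k + 1 = (l.take (k + 1)).length + 0 := by omega
        simp [List.getElem_append_right, hlen_take2]
      have hadj : G.Adj (l[k]'(by omega)) (l'[j]) := by
        have := List.isChain_iff_getElem.mp hch2 k (by omega)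
        rwa [hek, hex] at this
      rcases Nat.lt_or_ge (k + 1) j with hlt | hge
      · refine hnc k j (by omega) hj hlt ?_
        simp only [List.get_eq_getElem]
        rw [hlk k (by omega)]
        exact hadj
      · have : j = i + 1 := by omega
        subst this
        exact hne (by rw [hu'])
  -- the suffix path
  have hqlen : (l'.drop (i + 1)).length = l'.length - (i + 1) := by simp
  have hqget : ∀ j (hj : j < (l'.drop (i + 1)).length),
      (l'.drop (i + 1))[j] = l'[i + 1 + j]'(by rw [hqlen] at hj; omega) := by
    intro j hj; simp [List.getElem_drop]
  have hqpath : IsStPathL (delSet G R) u t (l'.drop (i + 1)) := by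
    refine ⟨⟨?_, hnd.sublist (List.drop_sublist _ _)⟩, ?_, ?_⟩
    · refine List.isChain_iff_getElem.mpr ?_
      intro j hj
      rw [hqlen] at hj
      rw [hqget j (by rw [hqlen]; omega), hqget (j + 1) (by rw [hqlen]; omega)]
      refine ⟨?_, hnotR _ (by omega) (by omega), hnotR _ (by omega) (by omega)⟩
      have h3 := List.isChain_iff_getElem.mp hch (i + 1 + j) (by omega)
      exact h3
    · rw [List.head?_eq_getElem?]
      have h0 : 0 < (l'.drop (i + 1)).length := by rw [hqlen]; omega
      rw [List.getElem?_eq_getElem h0, hqget 0 h0]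
      exact congrArg some hu'
    · rw [List.getLast?_eq_getElem?]
      have h0 : (l'.drop (i + 1)).length - 1 < (l'.drop (i + 1)).length := by
        rw [hqlen]; omega
      rw [List.getElem?_eq_getElem h0, hqget _ h0]
      rw [List.getLast?_eq_getElem?] at hlst
      have h1' : l'.length - 1 < l'.length := by omega
      rw [List.getElem?_eq_getElem h1'] at hlst
      have hidx : l'[i + 1 + ((l'.drop (i + 1)).length - 1)]'(by rw [hqlen] at h0 ⊢; omega) =
          l'[l'.length - 1]'h1' := by
        congr 1
        rw [hqlen]
        omega
      rw [hidx]
      exact hlst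
  obtain ⟨x, hxS, hxq⟩ := hcut _ hqpath
  obtain ⟨j, hj, hxj⟩ := List.mem_iff_getElem.mp hxq
  rw [hqget j hj] at hxj
  rw [hqlen] at hj
  have hadjux : (delSet G R).Adj u x := hSsub x hxS
  rcases Nat.lt_or_ge j 2 with h2 | h2
  · interval_cases j
    · exfalso
      have hxu : u = x := by rw [← hxj]; exact hu'.symm
      exact hadjux.ne hxu
    · have hwx : w = x := by rw [← hxj]; exact hlw.symm
      exact hwx ▸ hxS
  · exfalso
    have hch' := hnc (i + 1) (i + 1 + j) (by omega) (by omega) (by omega)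
    simp only [List.get_eq_getElem] at hch'
    rw [hu', hxj] at hch'
    exact hch' hadjux.1
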